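/- For every n ∈ ℕ and all z: z·P_n(z) = P_{n+1}(z) + Σ_{j=0}^{n} (−1)^{n−j} · ( Π_{l=0}^{n−j−1} b_{n−l} ) · (d_j − b_j) · P_j(z), where the empty product (for j = n) equals 1. -/

import Mathlib

open Finset

/-- Pochhammer symbol `(a)_k = a (a+1) ⋯ (a+k-1)`. -/
noncomputable def poch (a : ℝ) (k : ℕ) : ℝ := ∏ i ∈ Finset.range k, (a + (i : ℝ))

/-- The Hendriksen–van Rossum polynomial `P_n(z; α, β)`. -/
noncomputable def HR (α β : ℝ) (n : ℕ) (z : ℝ) : ℝ :=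
  (poch β n / poch (α + 1) n) *
    ∑ k ∈ Finset.range (n + 1),
      poch (-(n : ℝ)) k * poch (α + 1) k /
          (poch (1 - β - (n : ℝ)) k * (Nat.factorial k : ℝ)) * z ^ k

/-- `d_m(α,β) = −(m+β)/(m+α+1)`. -/
noncomputable def dco (α β m : ℝ) : ℝ := -(m + β) / (m + α + 1)

/-- `b_m(α,β) = −m(m+α+β)/((m+α)(m+α+1))`. -/
noncomputable def bco (α β m : ℝ) : ℝ := -(m * (m + α + β)) / ((m + α) * (m + α + 1))

noncomputable def cc (α β : ℝ) (n k : ℕ) : ℝ :=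
  poch (-(n : ℝ)) k * poch (α + 1) k / (poch (1 - β - (n : ℝ)) k * (Nat.factorial k : ℝ))

lemma HR_def (α β : ℝ) (n : ℕ) (z : ℝ) :
    HR α β n z = (poch β n / poch (α + 1) n) * ∑ k ∈ Finset.range (n + 1), cc α β n k * z ^ k := rfl

lemma poch_succ (a : ℝ) (k : ℕ) : poch a (k+1) = poch a k * (a + k) := by
  simp [poch, Finset.prod_range_succ]

lemma poch_shift (a : ℝ) (k : ℕ) : poch a (k+1) = a * poch (a+1) k := by
  rw [poch, Finset.prod_range_succ', poch]; push_cast; ring_nf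

lemma poch_ne_zero {a : ℝ} {k : ℕ} (h : ∀ i, i < k → a + (i:ℝ) ≠ 0) : poch a k ≠ 0 :=
  Finset.prod_ne_zero_iff.2 (fun i hi => h i (Finset.mem_range.1 hi))

lemma poch_neg_nat_zero (n : ℕ) : poch (-(n:ℝ)) (n+1) = 0 := by
  apply Finset.prod_eq_zero (Finset.mem_range.2 (Nat.lt_succ_self n))
  simp

lemma cc_zero (α β : ℝ) (n : ℕ) : cc α β n 0 = 1 := by
  simp [cc, poch]

lemma cc_top (α β : ℝ) (n : ℕ) : cc α β n (n+1) = 0 := by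
  simp [cc, poch_neg_nat_zero]

section
variable {α β : ℝ} (hα : ∀ m : ℤ, α ≠ (m : ℝ)) (hβ : ∀ m : ℤ, β ≠ (m : ℝ))

include hα in
lemma pa_ne (k : ℕ) : poch (α+1) k ≠ 0 := by
  apply poch_ne_zero; intro i _ h
  exact hα (-(1+i)) (by push_cast; linarith)

include hβ in
lemma pz_ne (n k : ℕ) : poch (1 - β - ((n:ℝ)+1)) k ≠ 0 := by
  apply poch_ne_zero; intro i _ h
  exact hβ ((i:ℤ) - n) (by push_cast; linarith)

include hβ in
lemma bn_ne (n : ℕ) : β + (n:ℝ) ≠ 0 := fun h => hβ (-(n:ℤ)) (by push_cast; linarith)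

include hα in
lemma an_ne (n : ℕ) : α + (n:ℝ) ≠ 0 := fun h => hα (-(n:ℤ)) (by push_cast; linarith)

end

set_option maxHeartbeats 1000000 in
lemma struct (X Y Z F Pa Pb v1 v2 v3 u4 v5 v6 v7 v8 w1 w2 w3 w4 w5 w6 : ℝ)
    (hPa : Pa ≠ 0) (hZ : Z ≠ 0) (hF : F ≠ 0)
    (hv1 : v1 ≠ 0) (hv2 : v2 ≠ 0) (hv3 : v3 ≠ 0) (hu4 : u4 ≠ 0) (hv5 : v5 ≠ 0)
    (hv7 : v7 ≠ 0) (hv8 : v8 ≠ 0)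
    (hN : Pb*X*Y*(v1*v2*v3*u4*v5*v7*v8) + w1*Pb*v1*X*w6*Y*v6*(v7*v8) = Pb*w2*w3*X*Y*w4*(v1*v3*u4*v5) + w5*Pb*X*w6*Y*w4*(v1*v3*u4*v7)) :
    Pb / Pa * (X * Y / (Z * F)) + w1/(v1*v2) * (Pb/v3 / (Pa/v1) * (X*w6/u4 * Y / (Z*v5/v6 * F))) = Pb*w2/(Pa*v2) * (w3*X*(Y*w4) / (v7*Z*(F*v8))) + w5/v2 * (Pb/Pa * (X*w6*(Y*w4) / (Z*v5*(F*v8)))) := by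
  have hE1 : (v1*v2*v3*u4*v5*v7*v8 : ℝ) ≠ 0 := by apply_rules [mul_ne_zero]
  have t1 : Pb / Pa * (X * Y / (Z * F)) = (Pb*X*Y*(v1*v2*v3*u4*v5*v7*v8)) / (Pa*Z*F*v1*v2*v3*u4*v5*v7*v8) := by
    have h2 : (Pb*X*Y*(v1*v2*v3*u4*v5*v7*v8)) / (Pa*Z*F*v1*v2*v3*u4*v5*v7*v8) = (Pb*X*Y) / (Pa*(Z*F)) * ((v1*v2*v3*u4*v5*v7*v8)/(v1*v2*v3*u4*v5*v7*v8)) := by ring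
    rw [h2, div_self hE1, mul_one]
    ring
  have hE2 : (v7*v8 : ℝ) ≠ 0 := by apply_rules [mul_ne_zero]
  have t2 : w1/(v1*v2) * (Pb/v3 / (Pa/v1) * (X*w6/u4 * Y / (Z*v5/v6 * F))) = (w1*Pb*v1*X*w6*Y*v6*(v7*v8)) / (Pa*Z*F*v1*v2*v3*u4*v5*v7*v8) := by
    rw [div_div_eq_mul_div, show Z*v5/v6*F = Z*v5*F/v6 from div_mul_eq_mul_div _ _ _, div_div_eq_mul_div]
    have h2 : (w1*Pb*v1*X*w6*Y*v6*(v7*v8)) / (Pa*Z*F*v1*v2*v3*u4*v5*v7*v8) = (w1*Pb*v1*X*w6*Y*v6) / ((v1*v2)*(v3*Pa*(u4*(Z*v5*F)))) * ((v7*v8)/(v7*v8)) := by ring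
    rw [h2, div_self hE2, mul_one]
    ring
  have hE3 : (v1*v3*u4*v5 : ℝ) ≠ 0 := by apply_rules [mul_ne_zero]
  have t3 : Pb*w2/(Pa*v2) * (w3*X*(Y*w4) / (v7*Z*(F*v8))) = (Pb*w2*w3*X*Y*w4*(v1*v3*u4*v5)) / (Pa*Z*F*v1*v2*v3*u4*v5*v7*v8) := by
    have h2 : (Pb*w2*w3*X*Y*w4*(v1*v3*u4*v5)) / (Pa*Z*F*v1*v2*v3*u4*v5*v7*v8) = (Pb*w2*w3*X*Y*w4) / ((Pa*v2)*(v7*Z*(F*v8))) * ((v1*v3*u4*v5)/(v1*v3*u4*v5)) := by ring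
    rw [h2, div_self hE3, mul_one]
    ring
  have hE4 : (v1*v3*u4*v7 : ℝ) ≠ 0 := by apply_rules [mul_ne_zero]
  have t4 : w5/v2 * (Pb/Pa * (X*w6*(Y*w4) / (Z*v5*(F*v8)))) = (w5*Pb*X*w6*Y*w4*(v1*v3*u4*v7)) / (Pa*Z*F*v1*v2*v3*u4*v5*v7*v8) := by
    have h2 : (w5*Pb*X*w6*Y*w4*(v1*v3*u4*v7)) / (Pa*Z*F*v1*v2*v3*u4*v5*v7*v8) = (w5*Pb*X*w6*Y*w4) / (v2*(Pa*(Z*v5*(F*v8)))) * ((v1*v3*u4*v7)/(v1*v3*u4*v7)) := by ring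
    rw [h2, div_self hE4, mul_one]
    ring
  rw [t1, t2, t3, t4, ← add_div, ← add_div, hN]

set_option maxHeartbeats 2000000 in
lemma key (α β : ℝ)
    (hα : ∀ m : ℤ, α ≠ (m : ℝ)) (hβ : ∀ m : ℤ, β ≠ (m : ℝ))
    (n k : ℕ) :
    poch β (n+1) / poch (α+1) (n+1) * cc α β (n+1) k
      + bco α β ((n:ℝ)+1) * (poch β n / poch (α+1) n * cc α β n k)
    = poch β (n+2) / poch (α+1) (n+2) * cc α β (n+2) (k+1)
      + dco α β ((n:ℝ)+1) * (poch β (n+1) / poch (α+1) (n+1) * cc α β (n+1) (k+1)) := by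
  have hF : (Nat.factorial k : ℝ) ≠ 0 := Nat.cast_ne_zero.2 (Nat.factorial_ne_zero k)
  have hrn1 : (n:ℝ) + 1 ≠ 0 := by positivity
  have hbn : β + (n:ℝ) ≠ 0 := bn_ne hβ n
  have han : α + 1 + (n:ℝ) ≠ 0 := by
    have := an_ne hα (n+1); push_cast at this; intro h; exact this (by linarith)
  have hda : (n:ℝ)+1+α+1 ≠ 0 := by
    have := an_ne hα (n+2); push_cast at this; intro h; exact this (by linarith)
  have hz1 : 1 - β - ((n:ℝ)+1) ≠ 0 := fun h => hβ (-(n:ℤ)) (by push_cast; linarith)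
  have hz2 : 1 - β - ((n:ℝ)+1) + (k:ℝ) ≠ 0 := fun h => hβ ((k:ℤ) - n) (by push_cast; linarith)
  have hz3 : 1 - β - ((n:ℝ)+2) ≠ 0 := fun h => hβ (-(n:ℤ)-1) (by push_cast; linarith)
  have hk1 : (k:ℝ) + 1 ≠ 0 := by positivity
  have hPa : poch (α+1) (n+1) ≠ 0 := pa_ne hα (n+1)
  have hZ : poch (1 - β - ((n:ℝ)+1)) k ≠ 0 := pz_ne hβ n k
  have hneg : -((n:ℝ)+1) ≠ 0 := by intro h; apply hrn1; linarith
  have e1 : poch (-((n:ℝ)+2)) (k+1) = -((n:ℝ)+2) * poch (-((n:ℝ)+1)) k := by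
    have h := poch_shift (-((n:ℝ)+2)) k
    have harg : -((n:ℝ)+2) + 1 = -((n:ℝ)+1) := by ring
    rw [harg] at h; exact h
  have e2 : poch (-((n:ℝ)+1)) (k+1) = poch (-((n:ℝ)+1)) k * (-((n:ℝ)+1) + k) := poch_succ _ _
  have e3 : poch (-(n:ℝ)) k = poch (-((n:ℝ)+1)) k * (-((n:ℝ)+1) + k) / -((n:ℝ)+1) := by
    have h := poch_shift (-((n:ℝ)+1)) k
    have harg : -((n:ℝ)+1) + 1 = -(n:ℝ) := by ring
    rw [harg] at h
    rw [eq_div_iff hneg]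
    linear_combination e2 - h
  have e4 : poch (1-β-((n:ℝ)+2)) (k+1) = (1-β-((n:ℝ)+2)) * poch (1-β-((n:ℝ)+1)) k := by
    have h := poch_shift (1-β-((n:ℝ)+2)) k
    have harg : 1-β-((n:ℝ)+2) + 1 = 1-β-((n:ℝ)+1) := by ring
    rw [harg] at h; exact h
  have e5 : poch (1-β-((n:ℝ)+1)) (k+1) = poch (1-β-((n:ℝ)+1)) k * (1-β-((n:ℝ)+1) + k) := poch_succ _ _
  have e6 : poch (1-β-(n:ℝ)) k = poch (1-β-((n:ℝ)+1)) k * (1-β-((n:ℝ)+1) + k) / (1-β-((n:ℝ)+1)) := by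
    have h := poch_shift (1-β-((n:ℝ)+1)) k
    have harg : 1-β-((n:ℝ)+1) + 1 = 1-β-(n:ℝ) := by ring
    rw [harg] at h
    rw [eq_div_iff hz1]
    linear_combination e5 - h
  have e7 : poch (α+1) (k+1) = poch (α+1) k * (α+1+k) := poch_succ _ _
  have e8 : ((k+1).factorial : ℝ) = (Nat.factorial k : ℝ) * ((k:ℝ)+1) := by
    rw [Nat.factorial_succ]; push_cast; ring
  have e9 : poch β (n+2) = poch β (n+1) * (β + ((n:ℝ)+1)) := by
    have h := poch_succ β (n+1); push_cast at h ⊢; linarith [h]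
  have e10 : poch (α+1) (n+2) = poch (α+1) (n+1) * (α+1+((n:ℝ)+1)) := by
    have h := poch_succ (α+1) (n+1); push_cast at h ⊢; linarith [h]
  have e11 : poch β n = poch β (n+1) / (β + (n:ℝ)) := by
    rw [eq_div_iff hbn]; linarith [poch_succ β n]
  have e12 : poch (α+1) n = poch (α+1) (n+1) / (α+1+(n:ℝ)) := by
    rw [eq_div_iff han]; linarith [poch_succ (α+1) n]
  simp only [cc]
  push_cast
  rw [e1, e2, e3, e4, e5, e6, e7, e8, e9, e10, e11, e12]
  simp only [dco, bco]
  linear_combination struct (poch (-((n:ℝ)+1)) k) (poch (α+1) k) (poch (1-β-((n:ℝ)+1)) k)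
    (Nat.factorial k : ℝ) (poch (α+1) (n+1)) (poch β (n+1))
    (α+1+(n:ℝ)) ((n:ℝ)+1+α+1) (β+(n:ℝ)) (-((n:ℝ)+1)) (1-β-((n:ℝ)+1)+(k:ℝ)) (1-β-((n:ℝ)+1))
    (1-β-((n:ℝ)+2)) ((k:ℝ)+1)
    (-(((n:ℝ)+1)*((n:ℝ)+1+α+β))) (β+((n:ℝ)+1)) (-((n:ℝ)+2)) (α+1+(k:ℝ)) (-(((n:ℝ)+1)+β)) (-((n:ℝ)+1)+(k:ℝ))
    hPa hZ hF han hda hbn hneg hz2 hz3 hk1 (by ring)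

lemma TTR (α β : ℝ)
    (hα : ∀ m : ℤ, α ≠ (m : ℝ)) (hβ : ∀ m : ℤ, β ≠ (m : ℝ))
    (n : ℕ) (z : ℝ) :
    z * HR α β (n+1) z
      = HR α β (n+1+1) z + dco α β ((n:ℝ)+1) * HR α β (n+1) z
        - bco α β ((n:ℝ)+1) * (z * HR α β n z) := by
  have hPa : poch (α+1) (n+1) ≠ 0 := pa_ne hα (n+1)
  have hda : (n:ℝ)+1+α+1 ≠ 0 := by
    have := an_ne hα (n+2); push_cast at this; intro h; exact this (by linarith)
  have e9 : poch β (n+2) = poch β (n+1) * (β + ((n:ℝ)+1)) := by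
    have h := poch_succ β (n+1); push_cast at h ⊢; linarith [h]
  have e10 : poch (α+1) (n+2) = poch (α+1) (n+1) * (α+1+((n:ℝ)+1)) := by
    have h := poch_succ (α+1) (n+1); push_cast at h ⊢; linarith [h]
  have A2d : poch β (n+2) / poch (α+1) (n+2)
      + dco α β ((n:ℝ)+1) * (poch β (n+1) / poch (α+1) (n+1)) = 0 := by
    rw [e9, e10, dco]
    have h2 : α+1+((n:ℝ)+1) ≠ 0 := by intro h; exact hda (by linarith)
    field_simp
    ring
  have key_sum : poch β (n+1) / poch (α+1) (n+1) * (∑ k ∈ Finset.range (n+2), cc α β (n+1) k * z^(k+1))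
      + bco α β ((n:ℝ)+1) * (poch β n / poch (α+1) n * (∑ k ∈ Finset.range (n+2), cc α β n k * z^(k+1)))
      = poch β (n+2) / poch (α+1) (n+2) * (∑ k ∈ Finset.range (n+2), cc α β (n+2) (k+1) * z^(k+1))
      + dco α β ((n:ℝ)+1) * (poch β (n+1) / poch (α+1) (n+1) * (∑ k ∈ Finset.range (n+2), cc α β (n+1) (k+1) * z^(k+1))) := by
    rw [Finset.mul_sum, Finset.mul_sum, Finset.mul_sum, Finset.mul_sum, Finset.mul_sum, Finset.mul_sum,
      ← Finset.sum_add_distrib, ← Finset.sum_add_distrib]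
    refine Finset.sum_congr rfl fun k _ => ?_
    linear_combination z^(k+1) * key α β hα hβ n k
  have u1 : ∑ k ∈ Finset.range (n+2), cc α β (n+1) k * z^(k+1)
      = (∑ k ∈ Finset.range (n+2), cc α β (n+1) k * z^k) * z := by
    rw [Finset.sum_mul]
    exact Finset.sum_congr rfl fun k _ => by ring
  have u0 : ∑ k ∈ Finset.range (n+2), cc α β n k * z^(k+1)
      = (∑ k ∈ Finset.range (n+1), cc α β n k * z^k) * z := by
    rw [Finset.sum_range_succ, cc_top, Finset.sum_mul]
    rw [zero_mul, add_zero]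
    exact Finset.sum_congr rfl fun k _ => by ring
  have u2 : ∑ k ∈ Finset.range (n+3), cc α β (n+2) k * z^k
      = (∑ k ∈ Finset.range (n+2), cc α β (n+2) (k+1) * z^(k+1)) + 1 := by
    rw [Finset.sum_range_succ' (fun k => cc α β (n+2) k * z^k) (n+2), cc_zero]
    norm_num
  have u3 : ∑ k ∈ Finset.range (n+2), cc α β (n+1) (k+1) * z^(k+1)
      = (∑ k ∈ Finset.range (n+2), cc α β (n+1) k * z^k) - 1 := by
    have h1 := Finset.sum_range_succ' (fun k => cc α β (n+1) k * z^k) (n+2)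
    have h2 := Finset.sum_range_succ (fun k => cc α β (n+1) k * z^k) (n+2)
    simp only [cc_zero, cc_top] at h1 h2
    simp only [pow_zero, one_mul, zero_mul, add_zero] at h1 h2
    linear_combination h2 - h1
  rw [HR_def, HR_def, HR_def, u2] at *
  rw [u1, u0, u3] at key_sum
  linear_combination key_sum - A2d

/-- `z P_n(z) = P_{n+1}(z) + Σ_{j=0}^{n} (−1)^{n−j} (Π_{l=0}^{n−j−1} b_{n−l}) (d_j − b_j) P_j(z)`. -/
theorem stmt10 (α β : ℝ)
    (hα : ∀ m : ℤ, α ≠ (m : ℝ)) (hβ : ∀ m : ℤ, β ≠ (m : ℝ))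
    (hαβ : ∀ m : ℤ, α + β ≠ (m : ℝ))
    (n : ℕ) (z : ℝ) :
    z * HR α β n z
      = HR α β (n + 1) z
        + ∑ j ∈ Finset.range (n + 1),
            (-1 : ℝ) ^ (n - j) * (∏ l ∈ Finset.range (n - j), bco α β ((n : ℝ) - (l : ℝ)))
              * (dco α β (j : ℝ) - bco α β (j : ℝ)) * HR α β j z := by
  induction n with
  | zero =>
      have hb0 : β ≠ 0 := fun h => hβ 0 (by push_cast; linarith)
      have ha1 : α + 1 ≠ 0 := fun h => hα (-1) (by push_cast; linarith)
      have hbco : bco α β 0 = 0 := by simp [bco]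
      have h0 : HR α β 0 z = 1 := by
        rw [HR_def]
        norm_num [Finset.sum_range_one, cc_zero, poch]
      have h1 : HR α β 1 z = β/(α+1) + z := by
        rw [HR_def]
        have hc : cc α β 1 1 = (α+1)/β := by
          simp [cc, poch, Nat.factorial]
          rw [div_eq_div_iff (by intro h; apply hb0; linarith) hb0]
          ring
        rw [Finset.sum_range_succ, Finset.sum_range_one, cc_zero, hc]
        have hp1 : poch β 1 = β := by simp [poch]
        have hp2 : poch (α+1) 1 = α+1 := by simp [poch]
        rw [hp1, hp2]
        field_simp
      norm_num [Finset.sum_range_one, hbco, h0, h1, dco]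
      field_simp
      ring
  | succ n ih =>
      rw [TTR α β hα hβ n z, ih]
      conv_rhs => rw [Finset.sum_range_succ]
      have hlast : (-1 : ℝ) ^ (n + 1 - (n+1)) * (∏ l ∈ Finset.range (n + 1 - (n+1)), bco α β (((n+1 : ℕ) : ℝ) - (l : ℝ)))
            * (dco α β ((n+1 : ℕ) : ℝ) - bco α β ((n+1 : ℕ) : ℝ)) * HR α β (n+1) z
          = (dco α β ((n:ℝ)+1) - bco α β ((n:ℝ)+1)) * HR α β (n+1) z := by
        simp only [Nat.sub_self, pow_zero, Finset.range_zero, Finset.prod_empty, one_mul]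
        push_cast
        ring
      have hsum : ∑ j ∈ Finset.range (n+1),
            (-1 : ℝ) ^ (n + 1 - j) * (∏ l ∈ Finset.range (n + 1 - j), bco α β (((n+1 : ℕ) : ℝ) - (l : ℝ)))
              * (dco α β (j : ℝ) - bco α β (j : ℝ)) * HR α β j z
          = -bco α β ((n:ℝ)+1) * ∑ j ∈ Finset.range (n+1),
              (-1 : ℝ) ^ (n - j) * (∏ l ∈ Finset.range (n - j), bco α β ((n : ℝ) - (l : ℝ)))
                * (dco α β (j : ℝ) - bco α β (j : ℝ)) * HR α β j z := by
        rw [Finset.mul_sum]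
        refine Finset.sum_congr rfl fun j hj => ?_
        have hj' : j ≤ n := Nat.lt_succ_iff.1 (Finset.mem_range.1 hj)
        have h1 : n + 1 - j = (n - j) + 1 := by omega
        rw [h1, pow_succ, Finset.prod_range_succ' (fun l => bco α β (((n+1 : ℕ) : ℝ) - (l : ℝ))) (n - j)]
        have harg : ∀ l : ℕ, (((n+1 : ℕ) : ℝ) - ((l+1 : ℕ) : ℝ)) = (n : ℝ) - (l : ℝ) := by
          intro l; push_cast; ring
        simp only [harg, Nat.cast_zero, sub_zero]
        push_cast
        ring
      rw [hsum, hlast]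
      ring
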